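/- Let β, β' ∈ Π_aff^{re,+} with β + β' = c, let d = (d_0, …, d_{n-1}) be a degree with d_i = 0 for some i, and let z_d = s_{γ_1} s_{γ_2} ⋯ s_{γ_k} be the reduced expression of z_d as a product of reflections in roots γ_1, …, γ_k < c whose supports are pairwise disconnected or which are pairwise perpendicular and comparable. If for every 1 ≤ i ≤ k either β' ∩ γ_i = 0 or both β' > γ_i and β' ⊥ γ_i, then the element w = (s_β s_{β'})^m z_d is reduced for every positive integer m; in particular ℓ((s_β s_{β'})^m z_d) = 2m(n−1) + ℓ(z_d). -/

import Mathlib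

open scoped BigOperators

namespace AffA

/-- Elements `⟨w, λ⟩` representing `w · t_λ` in the affine Weyl group
`W_aff = W ⋉ Q∨` of type `A_{n-1}^{(1)}`; the translation part `λ` is recorded
in `ε`-coordinates. -/
@[ext]
structure Aff (n : ℕ) where
  w : Equiv.Perm (Fin n)
  t : Fin n → ℤ

namespace Aff

variable {n : ℕ}

instance : Nonempty (Aff n) := ⟨⟨1, 0⟩⟩

/-- multiplication: `(w t_λ)(v t_μ) = (wv) t_{v⁻¹λ + μ}`. -/
def mul' (x y : Aff n) : Aff n := ⟨x.w * y.w, fun i => x.t (y.w i) + y.t i⟩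

def inv' (x : Aff n) : Aff n := ⟨x.w⁻¹, fun i => - x.t (x.w⁻¹ i)⟩

instance : Group (Aff n) where
  mul := mul'
  one := ⟨1, 0⟩
  inv := inv'
  mul_assoc a b c := by
    show mul' (mul' a b) c = mul' a (mul' b c)
    simp only [mul', Aff.mk.injEq]
    refine ⟨mul_assoc _ _ _, funext fun i => ?_⟩
    simp [Equiv.Perm.mul_apply, add_assoc]
  one_mul a := by
    obtain ⟨aw, av⟩ := a
    show mul' ⟨1, 0⟩ ⟨aw, av⟩ = ⟨aw, av⟩
    simp only [mul', Aff.mk.injEq]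
    exact ⟨one_mul _, funext fun i => by simp⟩
  mul_one a := by
    obtain ⟨aw, av⟩ := a
    show mul' ⟨aw, av⟩ ⟨1, 0⟩ = ⟨aw, av⟩
    simp only [mul', Aff.mk.injEq]
    exact ⟨mul_one _, funext fun i => by simp⟩
  inv_mul_cancel a := by
    obtain ⟨aw, av⟩ := a
    show mul' (inv' ⟨aw, av⟩) ⟨aw, av⟩ = ⟨1, 0⟩
    simp only [mul', inv', Aff.mk.injEq]
    exact ⟨inv_mul_cancel _, funext fun i => by simp⟩

/-- cyclic successor on the vertices `α_0, …, α_{n-1}` of the affine Dynkin diagram. -/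
def fsucc (i : Fin n) : Fin n :=
  ⟨(i.val + 1) % n, Nat.mod_lt _ (Nat.lt_of_le_of_lt (Nat.zero_le _) i.isLt)⟩

/-- the coefficient of `α_0`. -/
def coeff0 (a : Fin n → ℤ) : ℤ := if h : 0 < n then a ⟨0, h⟩ else 0

/-- the `ε`-coordinates of the finite part of an element of the affine root
lattice written in the coordinates of the simple roots `α_0, …, α_{n-1}`
(`δ` is sent to `0`). -/
def finPart (a : Fin n → ℤ) : Fin n → ℤ := fun i => a (fsucc i) - a i

/-- `c = δ = α_0 + α_1 + ⋯ + α_{n-1}`, in simple root coordinates. -/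
def cvec (n : ℕ) : Fin n → ℤ := fun _ => 1

/-- the affine Cartan matrix of type `A_{n-1}^{(1)}` (for `n ≥ 3`). -/
def cartan (i j : Fin n) : ℤ :=
  if i = j then 2 else if j = fsucc i ∨ i = fsucc j then -1 else 0

/-- the natural pairing `⟨a, b∨⟩` of elements of the affine root lattice
(simple root coordinates). -/
def pairing (a b : Fin n → ℤ) : ℤ := ∑ i : Fin n, ∑ j : Fin n, a i * cartan i j * b j

/-- real roots of the affine root system: lattice vectors of norm `2`. -/
def IsRealRoot (a : Fin n → ℤ) : Prop := pairing a a = 2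

/-- affine positive real roots: real roots with nonnegative coordinates. -/
def IsPosRoot (a : Fin n → ℤ) : Prop := IsRealRoot a ∧ ∀ i, 0 ≤ a i

/-- perpendicularity of affine roots. -/
def Perp (a b : Fin n → ℤ) : Prop := pairing a b = 0

/-- the support of an affine root. -/
def supp (a : Fin n → ℤ) : Finset (Fin n) := Finset.univ.filter fun i => a i ≠ 0

/-- the supports of `a` and `b` are disconnected in the affine Dynkin diagram
(a cycle on `α_0, …, α_{n-1}`): no vertex of one is equal or adjacent to a
vertex of the other. -/
def Disconn (a b : Fin n → ℤ) : Prop :=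
  ∀ i j : Fin n, a i ≠ 0 → b j ≠ 0 → i ≠ j ∧ j ≠ fsucc i ∧ i ≠ fsucc j

/-- for roots `a, b < c` (0–1 vectors), `a ∩ b = Σ_{α_i ∈ supp a ∩ supp b} α_i`. -/
def inter (a b : Fin n → ℤ) : Fin n → ℤ :=
  fun i => if a i ≠ 0 ∧ b i ≠ 0 then 1 else 0

instance : Nonempty (Equiv.Perm (Fin n)) := ⟨1⟩

/-- the reflection `s_β = s_α t_{mα}` associated to the real root `β = α + mδ`
(given in simple root coordinates). -/
noncomputable def sref (a : Fin n → ℤ) : Aff n :=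
  ⟨Classical.epsilon fun w : Equiv.Perm (Fin n) => ∃ p q : Fin n,
      finPart a = Pi.single p 1 - Pi.single q 1 ∧ w = Equiv.swap p q,
    fun i => coeff0 a * finPart a i⟩

/-- the simple reflections `s_0, …, s_{n-1}`. -/
noncomputable def simple (i : Fin n) : Aff n := sref (Pi.single i 1)

/-- the Coxeter length, via the Iwahori–Matsumoto formula
`ℓ(w t_λ) = Σ_{γ ∈ Π⁺} |χ(w·γ < 0) + ⟨λ, γ⟩|`. -/
def len (x : Aff n) : ℕ :=
  ∑ p : Fin n, ∑ q : Fin n,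
    if p < q then ((if x.w q < x.w p then (1 : ℤ) else 0) + (x.t p - x.t q)).natAbs else 0

/-- translation `t_v` by an element `v` of the (co)root lattice given in
`ε`-coordinates. -/
def trE (v : Fin n → ℤ) : Aff n := ⟨1, v⟩

/-- a Bruhat step: an edge of the moment graph which increases the length. -/
def bstep (u v : Aff n) : Prop :=
  (∃ a, IsPosRoot a ∧ v = u * sref a) ∧ len u < len v

/-- the Bruhat order: `u ≤ v` iff there is an increasing chain from `u` to `v`
in the moment graph. -/
def ble (u v : Aff n) : Prop := Relation.ReflTransGen bstep u v

/-- there is a chain in the moment graph from `u` to `v` of total degree `≤ d`. -/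
def ChainTo (d : Fin n → ℤ) (u v : Aff n) : Prop :=
  ∃ l : List (Fin n → ℤ),
    (∀ b ∈ l, IsPosRoot b) ∧ l.sum ≤ d ∧ v = u * (l.map sref).prod

/-- the set of elements reachable from some `u' ≤ u` by a chain of degree `≤ d`. -/
def nbhdSet (d : Fin n → ℤ) (u : Aff n) : Set (Aff n) :=
  {v | ∃ u', ble u' u ∧ ChainTo d u' v}

/-- the combinatorial curve neighborhood `Γ_d(u)`: the Bruhat-maximal elements
among those reachable from some `u' ≤ u` by a chain of degree `≤ d`. -/
def curveNbhd (d : Fin n → ℤ) (u : Aff n) : Set (Aff n) :=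
  {v | v ∈ nbhdSet d u ∧ ∀ x ∈ nbhdSet d u, ble v x → x = v}

/-- one step of the Hecke product. -/
noncomputable def heckeStep (u : Aff n) (i : Fin n) : Aff n :=
  if len u < len (u * simple i) then u * simple i else u

/-- the Hecke product `u · v`: multiply `u` on the right, left to right, by the
letters of a reduced word for `v`. -/
noncomputable def heckeMul (u v : Aff n) : Aff n :=
  (Classical.epsilon fun l : List (Fin n) =>
      (l.map simple).prod = v ∧ l.length = len v).foldl heckeStep u

/-- the Hecke product `s_{β_1} · s_{β_2} · ⋯ · s_{β_r}` of the reflections of a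
list of roots. -/
noncomputable def heckeList (l : List (Fin n → ℤ)) : Aff n :=
  l.foldl (fun u b => heckeMul u (sref b)) 1

/-- the defining recursion for `z_d`: `z_0 = id` and `z_d = s_α · z_{d-α}`
(Hecke product), where `α` is any maximal root with `α ≤ d`. -/
inductive IsZ : (Fin n → ℤ) → Aff n → Prop
  | zero : IsZ 0 1
  | step {d a : Fin n → ℤ} {x : Aff n} :
      IsPosRoot a → a ≤ d →
      (∀ b, IsPosRoot b → b ≤ d → a ≤ b → b = a) →
      IsZ (d - a) x → IsZ d (heckeMul (sref a) x)

end Aff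
end AffA

namespace AffA
namespace Aff
variable {n : ℕ}

lemma mul_w (x y : Aff n) : (x * y).w = x.w * y.w := rfl
lemma mul_t (x y : Aff n) : (x * y).t = fun i => x.t (y.w i) + y.t i := rfl
@[simp] lemma one_w : (1 : Aff n).w = 1 := rfl
@[simp] lemma one_t : (1 : Aff n).t = 0 := rfl

lemma fsucc_cases (i : Fin n) :
    (i.val + 1 = n ∧ (fsucc i).val = 0) ∨ (i.val + 1 < n ∧ (fsucc i).val = i.val + 1) := by
  have h := i.isLt
  rcases eq_or_lt_of_le (Nat.succ_le_of_lt h) with h1 | h1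
  · left
    refine ⟨h1, ?_⟩
    show (↑i + 1) % n = 0
    rw [show (i : ℕ) + 1 = n from h1]; exact Nat.mod_self n
  · right; exact ⟨h1, by simp [fsucc, Nat.mod_eq_of_lt h1]⟩

lemma fsucc_inj : Function.Injective (fsucc : Fin n → Fin n) := by
  intro i j h
  have h' := congrArg Fin.val h
  rcases fsucc_cases i with ⟨h1, h2⟩ | ⟨h1, h2⟩ <;> rcases fsucc_cases j with ⟨h3, h4⟩ | ⟨h3, h4⟩ <;>
    (apply Fin.ext; omega)

lemma sum_fsucc {M : Type*} [AddCommMonoid M] (f : Fin n → M) :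
    ∑ i, f (fsucc i) = ∑ i, f i :=
  Fintype.sum_bijective fsucc (Finite.injective_iff_bijective.mp fsucc_inj)
    (fun i => f (fsucc i)) f (fun _ => rfl)

lemma sum_finPart (a : Fin n → ℤ) : ∑ i, finPart a i = 0 := by
  unfold finPart
  rw [Finset.sum_sub_distrib, sum_fsucc, sub_self]

lemma ne_fsucc_self (hn : 3 ≤ n) (i : Fin n) : i ≠ fsucc i := by
  intro h; have := congrArg Fin.val h
  rcases fsucc_cases i with ⟨a1, b1⟩ | ⟨a1, b1⟩ <;> omega

lemma ne_fsucc_fsucc (hn : 3 ≤ n) (i : Fin n) : i ≠ fsucc (fsucc i) := by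
  intro h; have h1 := congrArg Fin.val h
  rcases fsucc_cases i with ⟨a1, b1⟩ | ⟨a1, b1⟩ <;>
    rcases fsucc_cases (fsucc i) with ⟨a2, b2⟩ | ⟨a2, b2⟩ <;> omega

lemma cartan_eq (hn : 3 ≤ n) (i j : Fin n) :
    cartan i j = (if i = j then 2 else 0) - (if j = fsucc i then 1 else 0)
      - (if i = fsucc j then 1 else 0) := by
  unfold cartan
  have hboth : ¬(j = fsucc i ∧ i = fsucc j) := by
    rintro ⟨h2, h3⟩
    have v2 := congrArg Fin.val h2; have v3 := congrArg Fin.val h3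
    rcases fsucc_cases i with ⟨a1, b1⟩ | ⟨a1, b1⟩ <;>
      rcases fsucc_cases j with ⟨a2, b2⟩ | ⟨a2, b2⟩ <;> omega
  by_cases e1 : i = j
  · subst e1
    simp [ne_fsucc_self hn i, (ne_fsucc_self hn i).symm, fun h => (ne_fsucc_self hn i) h]
  · by_cases e2 : j = fsucc i
    · have e3 : ¬ i = fsucc j := fun h => hboth ⟨e2, h⟩
      simp [e1, e2, e3, ne_fsucc_self hn i, ne_fsucc_fsucc hn i]
    · by_cases e3 : i = fsucc j
      · simp [e1, e2, e3, (ne_fsucc_self hn j).symm, ne_fsucc_fsucc hn j]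
      · simp [e1, e2, e3]

lemma pairing_eq (hn : 3 ≤ n) (a b : Fin n → ℤ) :
    pairing a b = ∑ i, finPart a i * finPart b i := by
  have key : ∀ i j : Fin n, a i * cartan i j * b j
      = 2 * (if j = i then a i * b i else 0)
        - (if j = fsucc i then a i * b (fsucc i) else 0)
        - (if i = fsucc j then a (fsucc j) * b j else 0) := by
    intro i j
    have hboth : ¬(j = fsucc i ∧ i = fsucc j) := by
      rintro ⟨h2, h3⟩
      have v2 := congrArg Fin.val h2; have v3 := congrArg Fin.val h3
      rcases fsucc_cases i with ⟨a1, b1⟩ | ⟨a1, b1⟩ <;>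
        rcases fsucc_cases j with ⟨a2, b2⟩ | ⟨a2, b2⟩ <;> omega
    rw [cartan_eq hn]
    by_cases e1 : i = j
    · subst e1
      have h2 := ne_fsucc_self hn i
      simp only [if_pos rfl, if_neg (fun h => h2 h), if_neg (Ne.symm h2)]
      simp [if_neg (fun h => h2 h)]
      ring
    · by_cases e2 : j = fsucc i
      · have e3 : ¬ i = fsucc j := fun h => hboth ⟨e2, h⟩
        subst e2
        simp [e1, e3, Ne.symm e1, ne_fsucc_self hn i, ne_fsucc_fsucc hn i]
        try ring
      · by_cases e3 : i = fsucc j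
        · subst e3
          simp [e1, e2, Ne.symm e1, (ne_fsucc_self hn j).symm, ne_fsucc_fsucc hn j]
          try ring
        · simp [e1, e2, e3, Ne.symm e1]
  have h1 : pairing a b = ∑ i : Fin n, ∑ j : Fin n,
      (2 * (if j = i then a i * b i else 0)
        - (if j = fsucc i then a i * b (fsucc i) else 0)
        - (if i = fsucc j then a (fsucc j) * b j else 0)) := by
    unfold pairing
    exact Finset.sum_congr rfl fun i _ => Finset.sum_congr rfl fun j _ => key i j
  have collapse3 : (∑ i : Fin n, ∑ j : Fin n, (if i = fsucc j then a (fsucc j) * b j else 0))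
      = ∑ j : Fin n, a (fsucc j) * b j := by
    rw [Finset.sum_comm]
    exact Finset.sum_congr rfl fun j _ => by simp
  have inner : ∀ i : Fin n, (∑ j : Fin n, (2 * (if j = i then a i * b i else 0)
        - (if j = fsucc i then a i * b (fsucc i) else 0)
        - (if i = fsucc j then a (fsucc j) * b j else 0)))
      = (2 * (a i * b i) - a i * b (fsucc i))
        - ∑ j : Fin n, (if i = fsucc j then a (fsucc j) * b j else 0) := by
    intro i
    rw [Finset.sum_sub_distrib, Finset.sum_sub_distrib]
    congr 1
    congr 1
    · rw [← Finset.mul_sum]; simp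
    · simp
  have h2 : pairing a b = (∑ i : Fin n, (2 * (a i * b i) - a i * b (fsucc i)))
      - ∑ j : Fin n, a (fsucc j) * b j := by
    rw [h1, Finset.sum_congr rfl fun i _ => inner i, Finset.sum_sub_distrib, collapse3]
  have hr : (∑ i, finPart a i * finPart b i)
      = ((∑ i : Fin n, (a (fsucc i) * b (fsucc i) + a i * b i))
        - ∑ i : Fin n, a (fsucc i) * b i) - ∑ i : Fin n, a i * b (fsucc i) := by
    rw [← Finset.sum_sub_distrib, ← Finset.sum_sub_distrib]
    exact Finset.sum_congr rfl fun i _ => by unfold finPart; ring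
  have hsplit : (∑ i : Fin n, (a (fsucc i) * b (fsucc i) + a i * b i))
      = (∑ i : Fin n, a i * b i) + ∑ i : Fin n, a i * b i := by
    rw [Finset.sum_add_distrib, sum_fsucc (fun i => a i * b i)]
  have hexp : (∑ i : Fin n, (2 * (a i * b i) - a i * b (fsucc i)))
      = 2 * (∑ i : Fin n, a i * b i) - ∑ i : Fin n, a i * b (fsucc i) := by
    rw [Finset.sum_sub_distrib, ← Finset.mul_sum]
  rw [h2, hr, hsplit, hexp]
  ring

end Aff
end AffA
namespace AffA
namespace Aff
variable {n : ℕ}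

/-- explicit reflection data -/
def mkRef (u v : Fin n) (c : ℤ) : Aff n :=
  ⟨Equiv.swap u v, fun i => c * ((if i = u then 1 else 0) - (if i = v then 1 else 0))⟩

lemma encode (hn : 3 ≤ n) {g : Fin n → ℤ} (h2 : pairing g g = 2)
    (h01 : ∀ i, g i = 0 ∨ g i = 1) :
    ∃ u v : Fin n, u ≠ v ∧
      (∀ i, finPart g i = (if i = u then 1 else 0) - (if i = v then 1 else 0)) ∧
      (∀ i : Fin n, g i = (if v.val < u.val then 1 else 0)
        + (if u.val < i.val then 1 else 0) - (if v.val < i.val then 1 else 0)) := by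
  classical
  have hval : ∀ i, finPart g i = -1 ∨ finPart g i = 0 ∨ finPart g i = 1 := by
    intro i
    have h1 := h01 (fsucc i); have h3 := h01 i
    unfold finPart; omega
  have hsum : ∑ i, finPart g i = 0 := sum_finPart g
  have hsq : ∑ i, finPart g i * finPart g i = 2 := by rw [← pairing_eq hn]; exact h2
  set A := Finset.univ.filter (fun i => finPart g i = 1) with hA
  set B := Finset.univ.filter (fun i => finPart g i = -1) with hB
  have hsum' : ∑ i, finPart g i = (A.card : ℤ) - B.card := by
    have hpt : ∀ i, finPart g i
        = (if finPart g i = 1 then (1:ℤ) else 0) - (if finPart g i = -1 then 1 else 0) := by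
      intro i; rcases hval i with h | h | h <;> simp [h]
    rw [Finset.sum_congr rfl fun i _ => hpt i, Finset.sum_sub_distrib]
    simp [hA, hB, Finset.sum_boole]
  have hsq' : ∑ i, finPart g i * finPart g i = (A.card : ℤ) + B.card := by
    have hpt : ∀ i, finPart g i * finPart g i
        = (if finPart g i = 1 then (1:ℤ) else 0) + (if finPart g i = -1 then 1 else 0) := by
      intro i; rcases hval i with h | h | h <;> norm_num [h]
    rw [Finset.sum_congr rfl fun i _ => hpt i, Finset.sum_add_distrib]
    simp [hA, hB, Finset.sum_boole]
  rw [hsum'] at hsum; rw [hsq'] at hsq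
  have hcA : A.card = 1 := by omega
  have hcB : B.card = 1 := by omega
  obtain ⟨u, hu⟩ := Finset.card_eq_one.mp hcA
  obtain ⟨v, hv⟩ := Finset.card_eq_one.mp hcB
  have hfu : finPart g u = 1 := by
    have : u ∈ A := by rw [hu]; exact Finset.mem_singleton_self u
    exact (Finset.mem_filter.mp this).2
  have hfv : finPart g v = -1 := by
    have : v ∈ B := by rw [hv]; exact Finset.mem_singleton_self v
    exact (Finset.mem_filter.mp this).2
  have huv : u ≠ v := by intro h; rw [h] at hfu; omega
  have hformula : ∀ i, finPart g i = (if i = u then 1 else 0) - (if i = v then 1 else 0) := by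
    intro i
    by_cases hiu : i = u
    · subst hiu; simp [hfu, huv]
    · by_cases hiv : i = v
      · subst hiv; simp [hfv, hiu]
      · have h1 : finPart g i ≠ 1 := by
          intro h
          have : i ∈ A := Finset.mem_filter.mpr ⟨Finset.mem_univ _, h⟩
          rw [hu] at this; exact hiu (Finset.mem_singleton.mp this)
        have hm1 : finPart g i ≠ -1 := by
          intro h
          have : i ∈ B := Finset.mem_filter.mpr ⟨Finset.mem_univ _, h⟩
          rw [hv] at this; exact hiv (Finset.mem_singleton.mp this)
        rcases hval i with h | h | h
        · exact absurd h hm1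
        · simp [h, hiu, hiv]
        · exact absurd h h1
  refine ⟨u, v, huv, hformula, ?_⟩
  have hn0 : 0 < n := by omega
  have key : ∀ m : ℕ, ∀ hm : m < n, g ⟨m, hm⟩
      = g ⟨0, hn0⟩ + (if u.val < m then 1 else 0) - (if v.val < m then 1 else 0) := by
    intro m
    induction m with
    | zero => intro hm; simp
    | succ k ih =>
      intro hm
      have hk : k < n := by omega
      have hstep : g ⟨k+1, hm⟩ = g ⟨k, hk⟩ + finPart g ⟨k, hk⟩ := by
        have hfs : fsucc (⟨k, hk⟩ : Fin n) = ⟨k+1, hm⟩ := by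
          apply Fin.ext; show (k+1) % n = k+1; exact Nat.mod_eq_of_lt hm
        unfold finPart; rw [hfs]; ring
      rw [hstep, ih hk, hformula ⟨k, hk⟩]
      have equ : ((⟨k, hk⟩ : Fin n) = u) ↔ (u.val = k) := by
        rw [Fin.ext_iff]; exact eq_comm
      have eqv : ((⟨k, hk⟩ : Fin n) = v) ↔ (v.val = k) := by
        rw [Fin.ext_iff]; exact eq_comm
      simp only [equ, eqv]
      split_ifs <;> omega
  have hgu : g u = 0 := by
    have h1 : g (fsucc u) - g u = 1 := hfu
    rcases h01 u with h | h <;> rcases h01 (fsucc u) with h' | h' <;> omega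
  have hg0 : g ⟨0, hn0⟩ = (if v.val < u.val then 1 else 0) := by
    have h1 := key u.val u.isLt
    rw [Fin.eta] at h1
    rw [hgu] at h1
    revert h1; split_ifs <;> omega
  intro i
  have h1 := key i.val i.isLt
  rw [Fin.eta] at h1
  rw [h1, hg0]

lemma sref_eq (hn : 3 ≤ n) {g : Fin n → ℤ} {u v : Fin n} (huv : u ≠ v)
    (hf : ∀ i, finPart g i = (if i = u then 1 else 0) - (if i = v then 1 else 0)) :
    sref g = mkRef u v (g ⟨0, by omega⟩) := by
  have hPi : finPart g = Pi.single u 1 - Pi.single v 1 := by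
    funext i; rw [hf i]
    simp [Pi.single_apply]
  have hex : ∃ w : Equiv.Perm (Fin n), ∃ p q : Fin n,
      finPart g = Pi.single p 1 - Pi.single q 1 ∧ w = Equiv.swap p q :=
    ⟨Equiv.swap u v, u, v, hPi, rfl⟩
  obtain ⟨p, q, hpq, hw⟩ := Classical.epsilon_spec hex
  have h1 := congrFun hpq u
  have h2 := congrFun hpq v
  rw [hf u] at h1; rw [hf v] at h2
  simp only [Pi.sub_apply, Pi.single_apply] at h1 h2
  simp only [if_true] at h1 h2
  rw [if_neg huv] at h1
  rw [if_neg (Ne.symm huv)] at h2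
  have hup : u = p := by
    by_cases e : u = p
    · exact e
    · exfalso; rw [if_neg e] at h1
      by_cases e2 : u = q
      · rw [if_pos e2] at h1; omega
      · rw [if_neg e2] at h1; omega
  have hvq : v = q := by
    by_cases e : v = q
    · exact e
    · exfalso; rw [if_neg e] at h2
      by_cases e2 : v = p
      · rw [if_pos e2] at h2; omega
      · rw [if_neg e2] at h2; omega
  subst hup; subst hvq
  unfold sref mkRef
  refine Aff.ext ?_ ?_
  · exact hw
  · funext i
    show coeff0 g * finPart g i = _
    rw [hf i]
    unfold coeff0
    rw [dif_pos (show 0 < n by omega)]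

end Aff
end AffA
namespace AffA
namespace Aff
variable {n : ℕ}

def cOf (u v : Fin n) : ℤ := if v.val < u.val then 1 else 0

def lprod (L : List (Fin n × Fin n)) : Aff n :=
  (L.map fun ab => mkRef ab.1 ab.2 (cOf ab.1 ab.2)).prod

lemma lprod_cons (ab : Fin n × Fin n) (L : List (Fin n × Fin n)) :
    lprod (ab :: L) = mkRef ab.1 ab.2 (cOf ab.1 ab.2) * lprod L := by
  unfold lprod; rw [List.map_cons, List.prod_cons]

def PDisj : (Fin n × Fin n) → (Fin n × Fin n) → Prop := fun ab cd =>
  ab.1 ≠ cd.1 ∧ ab.1 ≠ cd.2 ∧ ab.2 ≠ cd.1 ∧ ab.2 ≠ cd.2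

lemma prod_struct (L : List (Fin n × Fin n))
    (hne : ∀ ab ∈ L, ab.1 ≠ ab.2)
    (hdisj : L.Pairwise PDisj) :
    (∀ i : Fin n, (∀ ab ∈ L, i ≠ ab.1 ∧ i ≠ ab.2) →
        (lprod L).w i = i ∧ (lprod L).t i = 0) ∧
    ∀ ab ∈ L, (lprod L).w ab.1 = ab.2 ∧ (lprod L).w ab.2 = ab.1 ∧
      (lprod L).t ab.1 = cOf ab.1 ab.2 ∧ (lprod L).t ab.2 = -cOf ab.1 ab.2 := by
  induction L with
  | nil =>
    constructor
    · intro i _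
      constructor
      · show (1 : Equiv.Perm (Fin n)) i = i; simp
      · rfl
    · intro ab h; cases h
  | cons ab L ih =>
    have hrel : ∀ cd ∈ L, PDisj ab cd := (List.pairwise_cons.mp hdisj).1
    have hd' := (List.pairwise_cons.mp hdisj).2
    have hne' : ∀ cd ∈ L, cd.1 ≠ cd.2 := fun cd h => hne cd (List.mem_cons_of_mem _ h)
    obtain ⟨ihfix, ihpair⟩ := ih hne' hd'
    have habne : ab.1 ≠ ab.2 := hne ab (List.mem_cons_self)
    rw [lprod_cons]
    constructor
    · intro i hi
      have hi' : ∀ cd ∈ L, i ≠ cd.1 ∧ i ≠ cd.2 := fun cd h => hi cd (List.mem_cons_of_mem _ h)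
      obtain ⟨hw', ht'⟩ := ihfix i hi'
      have hiu : i ≠ ab.1 := (hi ab (List.mem_cons_self)).1
      have hiv : i ≠ ab.2 := (hi ab (List.mem_cons_self)).2
      constructor
      · show ((mkRef ab.1 ab.2 (cOf ab.1 ab.2)).w * (lprod L).w) i = i
        rw [Equiv.Perm.mul_apply, hw']
        show Equiv.swap ab.1 ab.2 i = i
        exact Equiv.swap_apply_of_ne_of_ne hiu hiv
      · show (mkRef ab.1 ab.2 (cOf ab.1 ab.2)).t ((lprod L).w i) + (lprod L).t i = 0
        rw [hw', ht']
        simp [mkRef, hiu, hiv]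
    · intro cd hcd
      rcases List.mem_cons.mp hcd with rfl | hcd'
      · have h1 : ∀ x ∈ L, cd.1 ≠ x.1 ∧ cd.1 ≠ x.2 :=
          fun x hx => ⟨(hrel x hx).1, (hrel x hx).2.1⟩
        have h2 : ∀ x ∈ L, cd.2 ≠ x.1 ∧ cd.2 ≠ x.2 :=
          fun x hx => ⟨(hrel x hx).2.2.1, (hrel x hx).2.2.2⟩
        obtain ⟨hw1, ht1⟩ := ihfix cd.1 h1
        obtain ⟨hw2, ht2⟩ := ihfix cd.2 h2
        refine ⟨?_, ?_, ?_, ?_⟩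
        · show ((mkRef cd.1 cd.2 (cOf cd.1 cd.2)).w * (lprod L).w) cd.1 = cd.2
          rw [Equiv.Perm.mul_apply, hw1]
          exact Equiv.swap_apply_left _ _
        · show ((mkRef cd.1 cd.2 (cOf cd.1 cd.2)).w * (lprod L).w) cd.2 = cd.1
          rw [Equiv.Perm.mul_apply, hw2]
          exact Equiv.swap_apply_right _ _
        · show (mkRef cd.1 cd.2 (cOf cd.1 cd.2)).t ((lprod L).w cd.1) + (lprod L).t cd.1
            = cOf cd.1 cd.2
          rw [hw1, ht1]
          simp [mkRef, habne, Ne.symm habne]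
        · show (mkRef cd.1 cd.2 (cOf cd.1 cd.2)).t ((lprod L).w cd.2) + (lprod L).t cd.2
            = -cOf cd.1 cd.2
          rw [hw2, ht2]
          simp [mkRef, habne, Ne.symm habne]
      · obtain ⟨hw1, hw2, ht1, ht2⟩ := ihpair cd hcd'
        have hr := hrel cd hcd'
        refine ⟨?_, ?_, ?_, ?_⟩
        · show ((mkRef ab.1 ab.2 (cOf ab.1 ab.2)).w * (lprod L).w) cd.1 = cd.2
          rw [Equiv.Perm.mul_apply, hw1]
          exact Equiv.swap_apply_of_ne_of_ne (Ne.symm hr.2.1) (Ne.symm hr.2.2.2)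
        · show ((mkRef ab.1 ab.2 (cOf ab.1 ab.2)).w * (lprod L).w) cd.2 = cd.1
          rw [Equiv.Perm.mul_apply, hw2]
          exact Equiv.swap_apply_of_ne_of_ne (Ne.symm hr.1) (Ne.symm hr.2.2.1)
        · show (mkRef ab.1 ab.2 (cOf ab.1 ab.2)).t ((lprod L).w cd.1) + (lprod L).t cd.1
            = cOf cd.1 cd.2
          rw [hw1, ht1]
          simp [mkRef, Ne.symm hr.2.1, Ne.symm hr.2.2.2]
        · show (mkRef ab.1 ab.2 (cOf ab.1 ab.2)).t ((lprod L).w cd.2) + (lprod L).t cd.2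
            = -cOf cd.1 cd.2
          rw [hw2, ht2]
          simp [mkRef, Ne.symm hr.1, Ne.symm hr.2.2.1]

end Aff
end AffA
namespace AffA
namespace Aff
variable {n : ℕ}

def ArcFact (q p u v : Fin n) : Prop :=
  u ≠ v ∧ u ≠ q ∧ v ≠ p ∧
  (v.val < u.val → v.val ≤ q.val ∧ q.val < u.val ∧ v.val < p.val ∧ p.val ≤ u.val) ∧
  (u.val < v.val → (v.val ≤ q.val ∨ q.val < u.val) ∧ (v.val < p.val ∨ p.val ≤ u.val))

lemma perp_numeric (hn : 3 ≤ n) {b g : Fin n → ℤ} {q p u v : Fin n}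
    (hbfin : ∀ i, finPart b i = (if i = q then (1:ℤ) else 0) - (if i = p then 1 else 0))
    (hgfin : ∀ i, finPart g i = (if i = u then (1:ℤ) else 0) - (if i = v then 1 else 0))
    (h : pairing b g = 0) :
    (if q = u then (1:ℤ) else 0) - (if q = v then 1 else 0)
      - (if p = u then 1 else 0) + (if p = v then 1 else 0) = 0 := by
  rw [pairing_eq hn] at h
  have hpt : ∀ i, finPart b i * finPart g i
      = (if i = q then (1:ℤ) else 0) * (if i = u then 1 else 0)
        - (if i = q then (1:ℤ) else 0) * (if i = v then 1 else 0)
        - (if i = p then (1:ℤ) else 0) * (if i = u then 1 else 0)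
        + (if i = p then (1:ℤ) else 0) * (if i = v then 1 else 0) := by
    intro i; rw [hbfin i, hgfin i]; ring
  rw [Finset.sum_congr rfl fun i _ => hpt i] at h
  have hdot : ∀ a c : Fin n, (∑ i, (if i = a then (1:ℤ) else 0) * (if i = c then 1 else 0))
      = if a = c then 1 else 0 := by
    intro a c
    have hp : ∀ i : Fin n, (if i = a then (1:ℤ) else 0) * (if i = c then 1 else 0)
        = if i = a then (if a = c then (1:ℤ) else 0) else 0 := by
      intro i
      by_cases h1 : i = a
      · subst h1; by_cases h2 : i = c <;> simp [h2]
      · simp [h1]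
    rw [Finset.sum_congr rfl fun i _ => hp i, Fintype.sum_ite_eq']
  simp only [Finset.sum_add_distrib, Finset.sum_sub_distrib] at h
  rw [hdot q u, hdot q v, hdot p u, hdot p v] at h
  exact h

lemma arcFact_main (hn : 3 ≤ n) {b g : Fin n → ℤ} {q p u v : Fin n}
    (hqp : q ≠ p) (huv : u ≠ v)
    (hbf : ∀ i : Fin n, b i = (if p.val < q.val then (1:ℤ) else 0)
      + (if q.val < i.val then 1 else 0) - (if p.val < i.val then 1 else 0))
    (hbfin : ∀ i, finPart b i = (if i = q then (1:ℤ) else 0) - (if i = p then 1 else 0))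
    (hgf : ∀ i : Fin n, g i = (if v.val < u.val then (1:ℤ) else 0)
      + (if u.val < i.val then 1 else 0) - (if v.val < i.val then 1 else 0))
    (hgfin : ∀ i, finPart g i = (if i = u then (1:ℤ) else 0) - (if i = v then 1 else 0))
    (hcond : (∀ i, b i = 0 ∨ g i = 0) ∨ ((∀ i, g i ≤ b i) ∧ pairing b g = 0)) :
    ArcFact q p u v := by
  have hn0 : 0 < n := by omega
  have hqp' : q.val ≠ p.val := fun h => hqp (Fin.ext h)
  have huv' : u.val ≠ v.val := fun h => huv (Fin.ext h)
  have hbq : b q = 0 := by have := hbf q; split_ifs at this <;> omega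
  have hbp : b p = 1 := by have := hbf p; split_ifs at this <;> omega
  have hgu : g u = 0 := by have := hgf u; split_ifs at this <;> omega
  have hgv : g v = 1 := by have := hgf v; split_ifs at this <;> omega
  have h0v : ((⟨0, hn0⟩ : Fin n)).val = 0 := rfl
  rcases hcond with hd | ⟨hle, hperp⟩
  · have hA1 : u ≠ q := by
      intro e
      have h1 : b (fsucc q) = 1 := by
        have h := hbfin q
        unfold finPart at h
        rw [if_pos rfl, if_neg hqp] at h
        omega
      have h2 : g (fsucc u) = 1 := by
        have h := hgfin u
        unfold finPart at h
        rw [if_pos rfl, if_neg huv] at h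
        omega
      rw [e] at h2
      rcases hd (fsucc q) with h | h <;> omega
    have hA2 : v ≠ p := by
      intro e
      rw [e] at hgv
      rcases hd p with h | h <;> omega
    refine ⟨huv, hA1, hA2, ?_, ?_⟩
    · intro hvu
      have hgp : g p = 0 := by rcases hd p with h | h; omega; exact h
      have h1 := hgf p
      rw [hgp] at h1
      have hvp : v.val < p.val ∧ p.val ≤ u.val := by split_ifs at h1 <;> omega
      have hg0 : g ⟨0, hn0⟩ = 1 := by
        have := hgf ⟨0, hn0⟩
        rw [h0v] at this  -- may fail; conditions contain val
        split_ifs at this <;> omega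
      have hb0 : b ⟨0, hn0⟩ = 0 := by rcases hd ⟨0, hn0⟩ with h | h; exact h; omega
      have hpq2 : ¬ p.val < q.val := by
        have := hbf ⟨0, hn0⟩
        rw [h0v] at this
        split_ifs at this <;> omega
      have hvq : v.val ≤ q.val := by
        by_contra hq
        push_neg at hq
        have hbv : b v = 1 := by have := hbf v; split_ifs at this <;> omega
        rcases hd v with h | h <;> omega
      exact ⟨hvq, by omega, hvp.1, hvp.2⟩
    · intro huv2
      constructor
      · by_contra hcon
        push_neg at hcon
        obtain ⟨h1, h2⟩ := hcon
        have hq1 : q.val + 1 < n := by have := v.isLt; omega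
        have hjv : ((⟨q.val + 1, hq1⟩ : Fin n)).val = q.val + 1 := rfl
        have hbj : b ⟨q.val + 1, hq1⟩ = 1 := by
          have := hbf ⟨q.val + 1, hq1⟩
          rw [hjv] at this
          split_ifs at this <;> omega
        have hgj : g ⟨q.val + 1, hq1⟩ = 1 := by
          have := hgf ⟨q.val + 1, hq1⟩
          rw [hjv] at this
          split_ifs at this <;> omega
        rcases hd ⟨q.val + 1, hq1⟩ with h | h <;> omega
      · by_contra hcon
        push_neg at hcon
        obtain ⟨h1, h2⟩ := hcon
        have hgp : g p = 1 := by have := hgf p; split_ifs at this <;> omega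
        rcases hd p with h | h <;> omega
  · have hperp' := perp_numeric hn hbfin hgfin hperp
    simp only [Fin.ext_iff] at hperp'
    have hA1 : u ≠ q := by
      intro e
      have e' : u.val = q.val := congrArg Fin.val e
      split_ifs at hperp' <;> omega
    have hA2 : v ≠ p := by
      intro e
      have e' : v.val = p.val := congrArg Fin.val e
      split_ifs at hperp' <;> omega
    have hA1' : u.val ≠ q.val := fun h => hA1 (Fin.ext h)
    have hA2' : v.val ≠ p.val := fun h => hA2 (Fin.ext h)
    refine ⟨huv, hA1, hA2, ?_, ?_⟩
    · intro hvu
      have hg0 : g ⟨0, hn0⟩ = 1 := by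
        have := hgf ⟨0, hn0⟩
        rw [h0v] at this
        split_ifs at this <;> omega
      have hb0 : 1 ≤ b ⟨0, hn0⟩ := by rw [← hg0]; exact hle _
      have hpq2 : p.val < q.val := by
        have := hbf ⟨0, hn0⟩
        rw [h0v] at this
        split_ifs at this <;> omega
      have hgq : g q ≤ 0 := by rw [← hbq]; exact hle q
      have hq2 : v.val ≤ q.val ∧ q.val < u.val := by
        have := hgf q
        split_ifs at this <;> omega
      have hp1 : p.val + 1 < n := by have := q.isLt; omega
      have hjv : ((⟨p.val + 1, hp1⟩ : Fin n)).val = p.val + 1 := rfl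
      have hbj : b ⟨p.val + 1, hp1⟩ = 0 := by
        have := hbf ⟨p.val + 1, hp1⟩
        rw [hjv] at this
        split_ifs at this <;> omega
      have hgj : g ⟨p.val + 1, hp1⟩ ≤ 0 := by rw [← hbj]; exact hle _
      have hgj2 := hgf ⟨p.val + 1, hp1⟩
      rw [hjv] at hgj2
      refine ⟨hq2.1, hq2.2, ?_, ?_⟩ <;> (split_ifs at hgj2 <;> omega)
    · intro huv2
      have hgq : g q ≤ 0 := by rw [← hbq]; exact hle q
      have hgqf := hgf q
      constructor
      · split_ifs at hgqf <;> omega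
      · by_contra hcon
        push_neg at hcon
        obtain ⟨h1, h2⟩ := hcon
        have hp1 : p.val + 1 < n := by have := v.isLt; omega
        have hjv : ((⟨p.val + 1, hp1⟩ : Fin n)).val = p.val + 1 := rfl
        have hbj : b ⟨p.val + 1, hp1⟩ = 0 := by
          have := hbf ⟨p.val + 1, hp1⟩
          rw [hjv] at this
          split_ifs at this <;> omega
        have hgj : g ⟨p.val + 1, hp1⟩ = 1 := by
          have := hgf ⟨p.val + 1, hp1⟩
          rw [hjv] at this
          split_ifs at this <;> omega
        have := hle ⟨p.val + 1, hp1⟩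
        omega

end Aff
end AffA
namespace AffA
namespace Aff
variable {n : ℕ}

lemma PDisj_symm : Symmetric (PDisj : (Fin n × Fin n) → (Fin n × Fin n) → Prop) := by
  intro ab cd h
  exact ⟨h.1.symm, h.2.2.1.symm, h.2.1.symm, h.2.2.2.symm⟩

lemma key_ineq (hn : 3 ≤ n) (q p : Fin n) (hqp : q ≠ p) (L : List (Fin n × Fin n))
    (hARC : ∀ ab ∈ L, ArcFact q p ab.1 ab.2)
    (hdisj : L.Pairwise PDisj)
    (i j : Fin n) (hij : i < j) :
    0 ≤ ((if (lprod L).w j < (lprod L).w i then (1:ℤ) else 0) + ((lprod L).t i - (lprod L).t j))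
      * (((if (lprod L).w i = q then (1:ℤ) else 0) - (if (lprod L).w i = p then 1 else 0))
        - ((if (lprod L).w j = q then (1:ℤ) else 0) - (if (lprod L).w j = p then 1 else 0))) := by
  classical
  have hne : ∀ ab ∈ L, ab.1 ≠ ab.2 := fun ab h => (hARC ab h).1
  obtain ⟨hfix, hpairs⟩ := prod_struct L hne hdisj
  have char : ∀ x : Fin n,
      ((lprod L).w x = x ∧ (lprod L).t x = 0 ∧ ∀ ab ∈ L, x.val ≠ ab.1.val ∧ x.val ≠ ab.2.val)
      ∨ ∃ ab ∈ L,
          ((x = ab.1 ∧ (lprod L).w x = ab.2) ∨ (x = ab.2 ∧ (lprod L).w x = ab.1)) ∧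
          ((ab.2.val < ab.1.val ∧ (lprod L).t ab.1 = 1 ∧ (lprod L).t ab.2 = -1 ∧
             ab.2.val ≤ q.val ∧ q.val < ab.1.val ∧ ab.2.val < p.val ∧ p.val ≤ ab.1.val) ∨
           (ab.1.val < ab.2.val ∧ (lprod L).t ab.1 = 0 ∧ (lprod L).t ab.2 = 0 ∧
             (ab.2.val ≤ q.val ∨ q.val < ab.1.val) ∧ (ab.2.val < p.val ∨ p.val ≤ ab.1.val))) ∧
          ab.1.val ≠ q.val ∧ ab.2.val ≠ p.val ∧ ab.1.val ≠ ab.2.val := by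
    intro x
    by_cases hx : ∀ ab ∈ L, x ≠ ab.1 ∧ x ≠ ab.2
    · left
      obtain ⟨h1, h2⟩ := hfix x hx
      exact ⟨h1, h2, fun ab h => ⟨fun e => (hx ab h).1 (Fin.ext e),
        fun e => (hx ab h).2 (Fin.ext e)⟩⟩
    · right
      push_neg at hx
      obtain ⟨ab, hab, hor⟩ := hx
      obtain ⟨hw1, hw2, ht1, ht2⟩ := hpairs ab hab
      obtain ⟨huv, huq, hvp, hc1, hc0⟩ := hARC ab hab
      have huv' : ab.1.val ≠ ab.2.val := fun h => huv (Fin.ext h)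
      refine ⟨ab, hab, ?_, ?_, fun h => huq (Fin.ext h), fun h => hvp (Fin.ext h), huv'⟩
      · by_cases e : x = ab.1
        · subst e; exact Or.inl ⟨rfl, hw1⟩
        · have e2 := hor e; subst e2; exact Or.inr ⟨rfl, hw2⟩
      · rcases Nat.lt_or_ge ab.2.val ab.1.val with hlt | hge
        · obtain ⟨f1, f2, f3, f4⟩ := hc1 hlt
          refine Or.inl ⟨hlt, ?_, ?_, f1, f2, f3, f4⟩
          · rw [ht1]; unfold cOf; rw [if_pos hlt]
          · rw [ht2]; unfold cOf; rw [if_pos hlt]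
        · have hlt2 : ab.1.val < ab.2.val := by omega
          obtain ⟨f1, f2⟩ := hc0 hlt2
          refine Or.inr ⟨hlt2, ?_, ?_, f1, f2⟩
          · rw [ht1]; unfold cOf; rw [if_neg (by omega)]
          · rw [ht2]; unfold cOf; rw [if_neg (by omega)]; ring
  rw [Fin.lt_def] at hij
  rcases char i with ⟨hwi, hti, hfreei⟩ | ⟨ab, hab, hioi, hdi, hq1, hp1, hne1⟩
  · rcases char j with ⟨hwj, htj, hfreej⟩ | ⟨cd, hcd, hioj, hdj, hq2, hp2, hne2⟩
    · rw [hwi, hwj, hti, htj]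
      simp only [Fin.lt_def, Fin.ext_iff]
      split_ifs <;> first | omega | norm_num
    · obtain ⟨hf1, hf2⟩ := hfreei cd hcd
      rcases hioj with ⟨rfl, hwj⟩ | ⟨rfl, hwj⟩ <;>
        rcases hdj with ⟨o1, t1, t2, f1, f2, f3, f4⟩ | ⟨o1, t1, t2, f1, f2⟩ <;>
        (rw [hwi, hwj]; simp only [hti, t1, t2];
         simp only [Fin.lt_def, Fin.ext_iff]; split_ifs <;> first | omega | norm_num)
  · rcases char j with ⟨hwj, htj, hfreej⟩ | ⟨cd, hcd, hioj, hdj, hq2, hp2, hne2⟩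
    · obtain ⟨hf1, hf2⟩ := hfreej ab hab
      rcases hioi with ⟨rfl, hwi⟩ | ⟨rfl, hwi⟩ <;>
        rcases hdi with ⟨o1, t1, t2, f1, f2, f3, f4⟩ | ⟨o1, t1, t2, f1, f2⟩ <;>
        (rw [hwi, hwj]; simp only [htj, t1, t2];
         simp only [Fin.lt_def, Fin.ext_iff]; split_ifs <;> first | omega | norm_num)
    · by_cases hsame : ab = cd
      · subst hsame
        rcases hioi with ⟨rfl, hwi⟩ | ⟨rfl, hwi⟩ <;> rcases hioj with ⟨rfl, hwj⟩ | ⟨rfl, hwj⟩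
        · exact absurd hij (by omega)
        · rcases hdi with ⟨o1, t1, t2, f1, f2, f3, f4⟩ | ⟨o1, t1, t2, f1, f2⟩ <;>
            (rw [hwi, hwj]; simp only [t1, t2];
             simp only [Fin.lt_def, Fin.ext_iff]; split_ifs <;> first | omega | norm_num)
        · rcases hdi with ⟨o1, t1, t2, f1, f2, f3, f4⟩ | ⟨o1, t1, t2, f1, f2⟩ <;>
            (rw [hwi, hwj]; simp only [t1, t2];
             simp only [Fin.lt_def, Fin.ext_iff]; split_ifs <;> first | omega | norm_num)
        · exact absurd hij (by omega)
      · have hpd := (haveI : Std.Symm (PDisj (n := n)) := ⟨fun a b h => PDisj_symm h⟩; List.Pairwise.forall hdisj) hab hcd hsame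
        have d1 : ab.1.val ≠ cd.1.val := fun h => hpd.1 (Fin.ext h)
        have d2 : ab.1.val ≠ cd.2.val := fun h => hpd.2.1 (Fin.ext h)
        have d3 : ab.2.val ≠ cd.1.val := fun h => hpd.2.2.1 (Fin.ext h)
        have d4 : ab.2.val ≠ cd.2.val := fun h => hpd.2.2.2 (Fin.ext h)
        rcases hioi with ⟨rfl, hwi⟩ | ⟨rfl, hwi⟩ <;> rcases hioj with ⟨rfl, hwj⟩ | ⟨rfl, hwj⟩ <;>
          rcases hdi with ⟨o1, t1, t2, f1, f2, f3, f4⟩ | ⟨o1, t1, t2, f1, f2⟩ <;>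
          rcases hdj with ⟨o1', t1', t2', f1', f2', f3', f4'⟩ | ⟨o1', t1', t2', f1', f2'⟩ <;>
          (rw [hwi, hwj]; simp only [t1, t2, t1', t2'];
           simp only [Fin.lt_def, Fin.ext_iff]; split_ifs <;> first | omega | norm_num)

end Aff
end AffA
namespace AffA
namespace Aff
variable {n : ℕ}

def Enc (γ : Fin n → ℤ) (ab : Fin n × Fin n) : Prop :=
  ab.1 ≠ ab.2 ∧
  (∀ i, finPart γ i = (if i = ab.1 then (1:ℤ) else 0) - (if i = ab.2 then 1 else 0)) ∧
  (∀ i : Fin n, γ i = (if ab.2.val < ab.1.val then (1:ℤ) else 0)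
    + (if ab.1.val < i.val then 1 else 0) - (if ab.2.val < i.val then 1 else 0)) ∧
  (∀ i, γ i = 0 ∨ γ i = 1)

lemma pdisj_of_rel (hn : 3 ≤ n) {g g' : Fin n → ℤ} {ab cd : Fin n × Fin n}
    (he : Enc g ab) (he' : Enc g' cd)
    (hrel : Disconn g g' ∨ (Perp g g' ∧ (g ≤ g' ∨ g' ≤ g))) :
    PDisj ab cd := by
  obtain ⟨huv, hfin, _, h01⟩ := he
  obtain ⟨huv', hfin', _, h01'⟩ := he'
  have hfa : finPart g ab.1 = 1 := by
    rw [hfin ab.1, if_pos rfl, if_neg huv]; ring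
  have hfb : finPart g ab.2 = -1 := by
    rw [hfin ab.2, if_pos rfl, if_neg (Ne.symm huv)]; ring
  have hfa' : finPart g' cd.1 = 1 := by
    rw [hfin' cd.1, if_pos rfl, if_neg huv']; ring
  have hfb' : finPart g' cd.2 = -1 := by
    rw [hfin' cd.2, if_pos rfl, if_neg (Ne.symm huv')]; ring
  unfold finPart at hfa hfb hfa' hfb'
  have hgu : g (fsucc ab.1) ≠ 0 := by
    have h1 := h01 ab.1; have h2 := h01 (fsucc ab.1); omega
  have hgv : g ab.2 ≠ 0 := by
    have h1 := h01 ab.2; have h2 := h01 (fsucc ab.2); omega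
  have hgu' : g' (fsucc cd.1) ≠ 0 := by
    have h1 := h01' cd.1; have h2 := h01' (fsucc cd.1); omega
  have hgv' : g' cd.2 ≠ 0 := by
    have h1 := h01' cd.2; have h2 := h01' (fsucc cd.2); omega
  rcases hrel with hd | ⟨hperp, _⟩
  · refine ⟨?_, ?_, ?_, ?_⟩
    · intro e
      exact (hd (fsucc ab.1) (fsucc cd.1) hgu hgu').1 (congrArg fsucc e)
    · intro e
      exact (hd (fsucc ab.1) cd.2 hgu hgv').2.2 (congrArg fsucc e)
    · intro e
      exact (hd ab.2 (fsucc cd.1) hgv hgu').2.1 (congrArg fsucc e.symm)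
    · intro e
      exact (hd ab.2 cd.2 hgv hgv').1 e
  · have hp := perp_numeric hn hfin hfin' hperp
    simp only [Fin.ext_iff] at hp
    have n1 : ab.1.val ≠ ab.2.val := fun h => huv (Fin.ext h)
    have n2 : cd.1.val ≠ cd.2.val := fun h => huv' (Fin.ext h)
    refine ⟨?_, ?_, ?_, ?_⟩ <;>
      (intro e; have e' := congrArg Fin.val e; split_ifs at hp <;> omega)

lemma pairwise_pdisj (hn : 3 ≤ n) :
    ∀ (l : List (Fin n → ℤ)) (L : List (Fin n × Fin n)),
      List.Forall₂ (Enc (n := n)) l L →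
      l.Pairwise (fun γ γ' => Disconn γ γ' ∨ (Perp γ γ' ∧ (γ ≤ γ' ∨ γ' ≤ γ))) →
      L.Pairwise PDisj := by
  intro l L h
  induction h with
  | nil => intro _; exact List.Pairwise.nil
  | @cons a b l' L' hab htail ih =>
    intro hp
    rw [List.pairwise_cons] at hp ⊢
    refine ⟨?_, ih hp.2⟩
    have haux : ∀ (l₂ : List (Fin n → ℤ)) (L₂ : List (Fin n × Fin n)),
        List.Forall₂ (Enc (n := n)) l₂ L₂ →
        (∀ γ ∈ l₂, Disconn a γ ∨ (Perp a γ ∧ (a ≤ γ ∨ γ ≤ a))) →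
        ∀ cd ∈ L₂, PDisj b cd := by
      intro l₂ L₂ h₂
      induction h₂ with
      | nil => intro _ cd hcd; cases hcd
      | @cons a₂ b₂ l₃ L₃ hab₂ ht₂ ih₂ =>
        intro hrel cd hcd
        rcases List.mem_cons.mp hcd with rfl | hcd'
        · exact pdisj_of_rel hn hab hab₂ (hrel a₂ (List.mem_cons_self))
        · exact ih₂ (fun γ hγ => hrel γ (List.mem_cons_of_mem _ hγ)) cd hcd'
    exact haux l' L' htail hp.1

lemma buildL (hn : 3 ≤ n)
    (l : List (Fin n → ℤ))
    (hroots : ∀ γ ∈ l, (∀ i, γ i = 0 ∨ γ i = 1) ∧ pairing γ γ = 2) :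
    ∃ L : List (Fin n × Fin n),
      (l.map sref).prod = lprod L ∧ List.Forall₂ (Enc (n := n)) l L := by
  induction l with
  | nil => exact ⟨[], rfl, List.Forall₂.nil⟩
  | cons γ l ih =>
    obtain ⟨h01, h2⟩ := hroots γ (List.mem_cons_self)
    obtain ⟨u, v, huv, hfin, hform⟩ := encode hn h2 h01
    have hc : ∀ hh : 0 < n, γ ⟨0, hh⟩ = cOf u v := by
      intro hh
      have h := hform ⟨0, hh⟩
      have h0 : ((⟨0, hh⟩ : Fin n)).val = 0 := rfl
      rw [h0] at h
      unfold cOf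
      split_ifs at h ⊢ <;> omega
    have hsref : sref γ = mkRef u v (cOf u v) := by
      rw [sref_eq hn huv hfin]
      exact congrArg (mkRef u v) (hc _)
    obtain ⟨L, hprod, henc⟩ := ih (fun γ' h => hroots γ' (List.mem_cons_of_mem _ h))
    refine ⟨(u, v) :: L, ?_, List.Forall₂.cons ⟨huv, hfin, hform, h01⟩ henc⟩
    rw [List.map_cons, List.prod_cons, hprod, lprod_cons, hsref]

lemma arcfacts_of (hn : 3 ≤ n) {bb : Fin n → ℤ} {q p : Fin n}
    (hqp : q ≠ p)
    (hbf : ∀ i : Fin n, bb i = (if p.val < q.val then (1:ℤ) else 0)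
      + (if q.val < i.val then 1 else 0) - (if p.val < i.val then 1 else 0))
    (hbfin : ∀ i, finPart bb i = (if i = q then (1:ℤ) else 0) - (if i = p then 1 else 0)) :
    ∀ (l : List (Fin n → ℤ)) (L : List (Fin n × Fin n)),
      List.Forall₂ (Enc (n := n)) l L →
      (∀ γ ∈ l, (∀ i, bb i = 0 ∨ γ i = 0) ∨ ((∀ i, γ i ≤ bb i) ∧ pairing bb γ = 0)) →
      ∀ ab ∈ L, ArcFact q p ab.1 ab.2 := by
  intro l L h
  induction h with
  | nil => intro _ ab hab; cases hab
  | @cons a b l' L' hab htail ih =>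
    intro hcond ab hL
    rcases List.mem_cons.mp hL with rfl | hL'
    · obtain ⟨huv, hfin, hform, _⟩ := hab
      exact arcFact_main hn hqp huv hbf hbfin hform hfin
        (hcond a (List.mem_cons_self))
    · exact ih (fun γ hγ => hcond γ (List.mem_cons_of_mem _ hγ)) ab hL'

end Aff
end AffA
namespace AffA
namespace Aff
variable {n : ℕ}

lemma natAbs_add_eq {A B : ℤ} (h : 0 ≤ A * B) : (A + B).natAbs = A.natAbs + B.natAbs := by
  rcases lt_trichotomy A 0 with hA | hA | hA
  · rcases lt_trichotomy B 0 with hB | hB | hB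
    · omega
    · omega
    · exfalso; nlinarith
  · omega
  · rcases lt_trichotomy B 0 with hB | hB | hB
    · exfalso; nlinarith
    · omega
    · omega

lemma pt_split (m : ℕ) (D B : ℤ) (h : 0 ≤ B * D) :
    ((m : ℤ) * D + B).natAbs = m * D.natAbs + B.natAbs := by
  have h1 : 0 ≤ ((m : ℤ) * D) * B := by
    have he : ((m : ℤ) * D) * B = (m : ℤ) * (B * D) := by ring
    rw [he]
    exact mul_nonneg (Int.ofNat_nonneg m) h
  rw [natAbs_add_eq h1, Int.natAbs_mul, Int.natAbs_natCast]

lemma two_mul_sum_pairs (g : Fin n → Fin n → ℕ) (hsym : ∀ i j, g i j = g j i)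
    (hdiag : ∀ i, g i i = 0) :
    2 * (∑ i : Fin n, ∑ j : Fin n, if i < j then g i j else 0)
      = ∑ i : Fin n, ∑ j : Fin n, g i j := by
  have hpt : ∀ i j : Fin n, g i j
      = (if i < j then g i j else 0) + (if j < i then g i j else 0) := by
    intro i j
    rcases lt_trichotomy i j with h | h | h
    · rw [if_pos h, if_neg (asymm h)]; ring
    · subst h; simp [hdiag, lt_irrefl]
    · rw [if_neg (asymm h), if_pos h]; ring
  have hsplit : (∑ i : Fin n, ∑ j : Fin n, g i j)
      = (∑ i : Fin n, ∑ j : Fin n, if i < j then g i j else 0)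
        + (∑ i : Fin n, ∑ j : Fin n, if j < i then g i j else 0) := by
    rw [← Finset.sum_add_distrib]
    refine Finset.sum_congr rfl fun i _ => ?_
    rw [← Finset.sum_add_distrib]
    exact Finset.sum_congr rfl fun j _ => hpt i j
  have hswap : (∑ i : Fin n, ∑ j : Fin n, if j < i then g i j else 0)
      = ∑ i : Fin n, ∑ j : Fin n, if i < j then g i j else 0 := by
    rw [Finset.sum_comm]
    refine Finset.sum_congr rfl fun j _ => Finset.sum_congr rfl fun i _ => ?_
    by_cases h : j < i
    · rw [if_pos h, if_pos h, hsym]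
    · rw [if_neg h, if_neg h]
  omega

lemma sum_pairs_perm (g : Fin n → Fin n → ℕ) (hsym : ∀ i j, g i j = g j i)
    (hdiag : ∀ i, g i i = 0) (w : Equiv.Perm (Fin n)) :
    (∑ i : Fin n, ∑ j : Fin n, if i < j then g (w i) (w j) else 0)
      = ∑ i : Fin n, ∑ j : Fin n, if i < j then g i j else 0 := by
  have h1 : 2 * (∑ i : Fin n, ∑ j : Fin n, if i < j then g (w i) (w j) else 0)
      = ∑ i : Fin n, ∑ j : Fin n, g (w i) (w j) :=
    two_mul_sum_pairs (fun i j => g (w i) (w j))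
      (fun i j => hsym (w i) (w j)) (fun i => hdiag (w i))
  have h2 := two_mul_sum_pairs g hsym hdiag
  have h3 : (∑ i : Fin n, ∑ j : Fin n, g (w i) (w j)) = ∑ i : Fin n, ∑ j : Fin n, g i j := by
    rw [Finset.sum_congr rfl fun i (_ : i ∈ Finset.univ) => Equiv.sum_comp w (g (w i))]
    exact Equiv.sum_comp w (fun i => ∑ j, g i j)
  omega

lemma vE_abs_sum (q p : Fin n) (hqp : q ≠ p) :
    (∑ j : Fin n, (((if j = q then (1:ℤ) else 0) - (if j = p then 1 else 0)).natAbs)) = 2 := by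
  have hpt : ∀ j : Fin n, (((if j = q then (1:ℤ) else 0) - (if j = p then 1 else 0)).natAbs)
      = (if j = q then 1 else 0) + (if j = p then 1 else 0) := by
    intro j
    by_cases h1 : j = q <;> by_cases h2 : j = p
    · exact absurd (h1 ▸ h2) hqp
    · simp [h1, h2, hqp, Ne.symm hqp]
    · simp [h1, h2, hqp, Ne.symm hqp]
    · simp [h1, h2, hqp, Ne.symm hqp]
  rw [Finset.sum_congr rfl fun j _ => hpt j, Finset.sum_add_distrib,
    Fintype.sum_ite_eq' q (fun _ => (1:ℕ)), Fintype.sum_ite_eq' p (fun _ => (1:ℕ))]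

lemma sum_g0 (hn : 3 ≤ n) (q p : Fin n) (hqp : q ≠ p) :
    (∑ i : Fin n, ∑ j : Fin n, if i < j then
        ((((if i = q then (1:ℤ) else 0) - (if i = p then 1 else 0))
          - ((if j = q then (1:ℤ) else 0) - (if j = p then 1 else 0))).natAbs) else 0)
      = 2 * (n - 1) := by
  have hq' : q.val ≠ p.val := fun h => hqp (Fin.ext h)
  have hsym : ∀ i j : Fin n, ((((if i = q then (1:ℤ) else 0) - (if i = p then 1 else 0))
      - ((if j = q then (1:ℤ) else 0) - (if j = p then 1 else 0))).natAbs)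
      = ((((if j = q then (1:ℤ) else 0) - (if j = p then 1 else 0))
      - ((if i = q then (1:ℤ) else 0) - (if i = p then 1 else 0))).natAbs) := by
    intro i j
    rw [← Int.natAbs_neg]
    congr 1
    ring
  have hdiag : ∀ i : Fin n, ((((if i = q then (1:ℤ) else 0) - (if i = p then 1 else 0))
      - ((if i = q then (1:ℤ) else 0) - (if i = p then 1 else 0))).natAbs) = 0 := by
    intro i; simp
  have h2m := two_mul_sum_pairs _ hsym hdiag
  have hpt : ∀ i j : Fin n, ((((if i = q then (1:ℤ) else 0) - (if i = p then 1 else 0))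
        - ((if j = q then (1:ℤ) else 0) - (if j = p then 1 else 0))).natAbs)
        + (if i = j then
            ((((if i = q then (1:ℤ) else 0) - (if i = p then 1 else 0)).natAbs)
              + (((if j = q then (1:ℤ) else 0) - (if j = p then 1 else 0)).natAbs)) else 0)
      = ((((if i = q then (1:ℤ) else 0) - (if i = p then 1 else 0)).natAbs)
          + (((if j = q then (1:ℤ) else 0) - (if j = p then 1 else 0)).natAbs)) := by
    intro i j
    simp only [Fin.ext_iff]
    split_ifs <;> omega
  have hdouble : (∑ i : Fin n, ∑ j : Fin n, ((((if i = q then (1:ℤ) else 0)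
        - (if i = p then 1 else 0))
        - ((if j = q then (1:ℤ) else 0) - (if j = p then 1 else 0))).natAbs))
      + (∑ i : Fin n, ∑ j : Fin n, if i = j then
            ((((if i = q then (1:ℤ) else 0) - (if i = p then 1 else 0)).natAbs)
              + (((if j = q then (1:ℤ) else 0) - (if j = p then 1 else 0)).natAbs)) else 0)
      = ∑ i : Fin n, ∑ j : Fin n,
          ((((if i = q then (1:ℤ) else 0) - (if i = p then 1 else 0)).natAbs)
            + (((if j = q then (1:ℤ) else 0) - (if j = p then 1 else 0)).natAbs)) := by
    rw [← Finset.sum_add_distrib]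
    refine Finset.sum_congr rfl fun i _ => ?_
    rw [← Finset.sum_add_distrib]
    exact Finset.sum_congr rfl fun j _ => hpt i j
  have hdiagsum : (∑ i : Fin n, ∑ j : Fin n, if i = j then
        ((((if i = q then (1:ℤ) else 0) - (if i = p then 1 else 0)).natAbs)
          + (((if j = q then (1:ℤ) else 0) - (if j = p then 1 else 0)).natAbs)) else 0)
      = ∑ i : Fin n, (((((if i = q then (1:ℤ) else 0) - (if i = p then 1 else 0)).natAbs))
          + ((((if i = q then (1:ℤ) else 0) - (if i = p then 1 else 0)).natAbs))) := by
    refine Finset.sum_congr rfl fun i _ => ?_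
    exact Fintype.sum_ite_eq i (fun j =>
      ((((if i = q then (1:ℤ) else 0) - (if i = p then 1 else 0)).natAbs)
        + (((if j = q then (1:ℤ) else 0) - (if j = p then 1 else 0)).natAbs)))
  have hS : (∑ i : Fin n, (((if i = q then (1:ℤ) else 0) - (if i = p then 1 else 0)).natAbs)) = 2 :=
    vE_abs_sum q p hqp
  have hdsum2 : (∑ i : Fin n, (((((if i = q then (1:ℤ) else 0) - (if i = p then 1 else 0)).natAbs))
      + ((((if i = q then (1:ℤ) else 0) - (if i = p then 1 else 0)).natAbs)))) = 4 := by
    rw [Finset.sum_add_distrib, hS]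
  have hrhs : (∑ i : Fin n, ∑ j : Fin n,
        ((((if i = q then (1:ℤ) else 0) - (if i = p then 1 else 0)).natAbs)
          + (((if j = q then (1:ℤ) else 0) - (if j = p then 1 else 0)).natAbs))) = 4 * n := by
    have hin : ∀ i : Fin n, (∑ j : Fin n,
        ((((if i = q then (1:ℤ) else 0) - (if i = p then 1 else 0)).natAbs)
          + (((if j = q then (1:ℤ) else 0) - (if j = p then 1 else 0)).natAbs)))
        = n * (((if i = q then (1:ℤ) else 0) - (if i = p then 1 else 0)).natAbs) + 2 := by
      intro i
      rw [Finset.sum_add_distrib, hS, Finset.sum_const, Finset.card_univ, Fintype.card_fin,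
        smul_eq_mul]
    rw [Finset.sum_congr rfl fun i _ => hin i, Finset.sum_add_distrib, ← Finset.mul_sum, hS,
      Finset.sum_const, Finset.card_univ, Fintype.card_fin, smul_eq_mul]
    ring
  omega

lemma len_one_t (t : Fin n → ℤ) :
    len (⟨1, t⟩ : Aff n) = ∑ i : Fin n, ∑ j : Fin n, if i < j then (t i - t j).natAbs else 0 := by
  unfold len
  refine Finset.sum_congr rfl fun i _ => Finset.sum_congr rfl fun j _ => ?_
  by_cases h : i < j
  · rw [if_pos h, if_pos h]
    show ((if ((1 : Equiv.Perm (Fin n)) j < (1 : Equiv.Perm (Fin n)) i) then (1:ℤ) else 0)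
      + (t i - t j)).natAbs = (t i - t j).natAbs
    have hne : ¬ ((1 : Equiv.Perm (Fin n)) j < (1 : Equiv.Perm (Fin n)) i) := by
      simp only [Equiv.Perm.one_apply]
      exact not_lt.mpr (le_of_lt h)
    rw [if_neg hne, zero_add]
  · rw [if_neg h, if_neg h]

lemma mul_one_t (s : Fin n → ℤ) (z : Aff n) :
    (⟨1, s⟩ : Aff n) * z = ⟨z.w, fun i => s (z.w i) + z.t i⟩ :=
  Aff.ext (one_mul _) rfl

lemma trE_pow (v : Fin n → ℤ) (m : ℕ) :
    (⟨1, v⟩ : Aff n) ^ m = ⟨1, fun i => (m : ℤ) * v i⟩ := by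
  induction m with
  | zero =>
    refine Aff.ext rfl ?_
    funext i
    show (0 : ℤ) = ((0:ℕ) : ℤ) * v i
    simp
  | succ k ih =>
    rw [pow_succ, ih]
    refine Aff.ext (mul_one _) ?_
    funext i
    show (k : ℤ) * v ((1 : Equiv.Perm (Fin n)) i) + v i = ((k+1 : ℕ) : ℤ) * v i
    simp only [Equiv.Perm.one_apply]
    push_cast
    ring

lemma len_Xm (hn : 3 ≤ n) (q p : Fin n) (hqp : q ≠ p) (m : ℕ) (s : Fin n → ℤ)
    (hs : ∀ x, s x = (m : ℤ) * ((if x = q then (1:ℤ) else 0) - (if x = p then 1 else 0))) :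
    len (⟨1, s⟩ : Aff n) = 2 * m * (n - 1) := by
  rw [len_one_t]
  have hpt : ∀ i j : Fin n, (s i - s j).natAbs
      = m * ((((if i = q then (1:ℤ) else 0) - (if i = p then 1 else 0))
          - ((if j = q then (1:ℤ) else 0) - (if j = p then 1 else 0))).natAbs) := by
    intro i j
    rw [hs, hs, show (m : ℤ) * ((if i = q then (1:ℤ) else 0) - (if i = p then 1 else 0))
        - (m : ℤ) * ((if j = q then (1:ℤ) else 0) - (if j = p then 1 else 0))
      = (m : ℤ) * (((if i = q then (1:ℤ) else 0) - (if i = p then 1 else 0))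
          - ((if j = q then (1:ℤ) else 0) - (if j = p then 1 else 0))) from by ring,
      Int.natAbs_mul, Int.natAbs_natCast]
  have hout : (∑ i : Fin n, ∑ j : Fin n, if i < j then (s i - s j).natAbs else 0)
      = m * ∑ i : Fin n, ∑ j : Fin n, if i < j then
          ((((if i = q then (1:ℤ) else 0) - (if i = p then 1 else 0))
            - ((if j = q then (1:ℤ) else 0) - (if j = p then 1 else 0))).natAbs) else 0 := by
    rw [Finset.mul_sum]
    refine Finset.sum_congr rfl fun i _ => ?_
    rw [Finset.mul_sum]
    refine Finset.sum_congr rfl fun j _ => ?_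
    by_cases h : i < j
    · rw [if_pos h, if_pos h, hpt]
    · rw [if_neg h, if_neg h, Nat.mul_zero]
  rw [hout, sum_g0 hn q p hqp]
  ring

lemma srefs_mul (hn : 3 ≤ n) (q p : Fin n) (hqp : q ≠ p) (c c' : ℤ) (hcc : c + c' = 1) :
    mkRef p q c * mkRef q p c'
      = ⟨1, fun i => (if i = q then (1:ℤ) else 0) - (if i = p then 1 else 0)⟩ := by
  refine Aff.ext ?_ ?_
  · show Equiv.swap p q * Equiv.swap q p = 1
    rw [Equiv.swap_comm q p]
    exact Equiv.swap_mul_self _ _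
  · funext i
    show c * ((if (Equiv.swap q p) i = p then (1:ℤ) else 0)
        - (if (Equiv.swap q p) i = q then 1 else 0))
      + c' * ((if i = q then (1:ℤ) else 0) - (if i = p then 1 else 0))
      = (if i = q then (1:ℤ) else 0) - (if i = p then 1 else 0)
    by_cases hiq : i = q
    · subst hiq
      rw [Equiv.swap_apply_left]
      rw [if_pos rfl, if_pos rfl, if_neg hqp, if_neg (Ne.symm hqp)]
      linarith
    · by_cases hip : i = p
      · subst hip
        rw [Equiv.swap_apply_right]
        rw [if_pos rfl, if_pos rfl, if_neg (Ne.symm hqp), if_neg hqp]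
        linarith
      · rw [Equiv.swap_apply_of_ne_of_ne hiq hip]
        simp only [if_neg hiq, if_neg hip]
        ring

lemma len_additive (hn : 3 ≤ n) (q p : Fin n) (hqp : q ≠ p) (L : List (Fin n × Fin n))
    (hARC : ∀ ab ∈ L, ArcFact q p ab.1 ab.2) (hdisj : L.Pairwise PDisj)
    (m : ℕ) (s : Fin n → ℤ)
    (hs : ∀ x, s x = (m : ℤ) * ((if x = q then (1:ℤ) else 0) - (if x = p then 1 else 0))) :
    len ((⟨1, s⟩ : Aff n) * lprod L) = 2 * m * (n - 1) + len (lprod L) := by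
  rw [mul_one_t]
  have hlen1 : len (⟨(lprod L).w, fun i => s ((lprod L).w i) + (lprod L).t i⟩ : Aff n)
      = ∑ i : Fin n, ∑ j : Fin n, if i < j then
          (m * (((((if (lprod L).w i = q then (1:ℤ) else 0)
              - (if (lprod L).w i = p then 1 else 0))
            - ((if (lprod L).w j = q then (1:ℤ) else 0)
              - (if (lprod L).w j = p then 1 else 0)))).natAbs))
          + (((if (lprod L).w j < (lprod L).w i then (1:ℤ) else 0)
              + ((lprod L).t i - (lprod L).t j)).natAbs)
        else 0 := by
    unfold len
    refine Finset.sum_congr rfl fun i _ => Finset.sum_congr rfl fun j _ => ?_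
    by_cases h : i < j
    · rw [if_pos h, if_pos h]
      have hBD := key_ineq hn q p hqp L hARC hdisj i j h
      show ((if ((lprod L).w j < (lprod L).w i) then (1:ℤ) else 0)
          + ((s ((lprod L).w i) + (lprod L).t i) - (s ((lprod L).w j) + (lprod L).t j))).natAbs
        = _
      rw [show ((if ((lprod L).w j < (lprod L).w i) then (1:ℤ) else 0)
          + ((s ((lprod L).w i) + (lprod L).t i) - (s ((lprod L).w j) + (lprod L).t j)))
        = (m : ℤ) * ((((if (lprod L).w i = q then (1:ℤ) else 0)
              - (if (lprod L).w i = p then 1 else 0))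
            - ((if (lprod L).w j = q then (1:ℤ) else 0)
              - (if (lprod L).w j = p then 1 else 0))))
          + ((if (lprod L).w j < (lprod L).w i then (1:ℤ) else 0)
              + ((lprod L).t i - (lprod L).t j)) from by rw [hs, hs]; ring]
      exact pt_split m _ _ hBD
    · rw [if_neg h, if_neg h]
  rw [hlen1]
  have hsplit : (∑ i : Fin n, ∑ j : Fin n, if i < j then
          (m * (((((if (lprod L).w i = q then (1:ℤ) else 0)
              - (if (lprod L).w i = p then 1 else 0))
            - ((if (lprod L).w j = q then (1:ℤ) else 0)
              - (if (lprod L).w j = p then 1 else 0)))).natAbs))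
          + (((if (lprod L).w j < (lprod L).w i then (1:ℤ) else 0)
              + ((lprod L).t i - (lprod L).t j)).natAbs)
        else 0)
      = (∑ i : Fin n, ∑ j : Fin n, if i < j then
          (m * (((((if (lprod L).w i = q then (1:ℤ) else 0)
              - (if (lprod L).w i = p then 1 else 0))
            - ((if (lprod L).w j = q then (1:ℤ) else 0)
              - (if (lprod L).w j = p then 1 else 0)))).natAbs)) else 0)
        + (∑ i : Fin n, ∑ j : Fin n, if i < j then
            (((if (lprod L).w j < (lprod L).w i then (1:ℤ) else 0)
              + ((lprod L).t i - (lprod L).t j)).natAbs) else 0) := by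
    rw [← Finset.sum_add_distrib]
    refine Finset.sum_congr rfl fun i _ => ?_
    rw [← Finset.sum_add_distrib]
    refine Finset.sum_congr rfl fun j _ => ?_
    by_cases h : i < j
    · rw [if_pos h, if_pos h, if_pos h]
    · rw [if_neg h, if_neg h, if_neg h]
  rw [hsplit]
  have hfirst : (∑ i : Fin n, ∑ j : Fin n, if i < j then
          (m * (((((if (lprod L).w i = q then (1:ℤ) else 0)
              - (if (lprod L).w i = p then 1 else 0))
            - ((if (lprod L).w j = q then (1:ℤ) else 0)
              - (if (lprod L).w j = p then 1 else 0)))).natAbs)) else 0)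
      = 2 * m * (n - 1) := by
    have hperm : (∑ i : Fin n, ∑ j : Fin n, if i < j then
          (m * (((((if (lprod L).w i = q then (1:ℤ) else 0)
              - (if (lprod L).w i = p then 1 else 0))
            - ((if (lprod L).w j = q then (1:ℤ) else 0)
              - (if (lprod L).w j = p then 1 else 0)))).natAbs)) else 0)
        = ∑ i : Fin n, ∑ j : Fin n, if i < j then
          (m * ((((if i = q then (1:ℤ) else 0) - (if i = p then 1 else 0))
            - ((if j = q then (1:ℤ) else 0) - (if j = p then 1 else 0))).natAbs)) else 0 :=
      sum_pairs_perm
        (fun a b => m * ((((if a = q then (1:ℤ) else 0) - (if a = p then 1 else 0))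
          - ((if b = q then (1:ℤ) else 0) - (if b = p then 1 else 0))).natAbs))
        (fun a b => by
          have habs : ((((if a = q then (1:ℤ) else 0) - (if a = p then 1 else 0))
              - ((if b = q then (1:ℤ) else 0) - (if b = p then 1 else 0))).natAbs)
            = ((((if b = q then (1:ℤ) else 0) - (if b = p then 1 else 0))
              - ((if a = q then (1:ℤ) else 0) - (if a = p then 1 else 0))).natAbs) := by
            rw [← Int.natAbs_neg]
            congr 1
            ring
          show m * ((((if a = q then (1:ℤ) else 0) - (if a = p then 1 else 0))
              - ((if b = q then (1:ℤ) else 0) - (if b = p then 1 else 0))).natAbs)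
            = m * ((((if b = q then (1:ℤ) else 0) - (if b = p then 1 else 0))
              - ((if a = q then (1:ℤ) else 0) - (if a = p then 1 else 0))).natAbs)
          rw [habs])
        (fun a => by simp)
        ((lprod L).w)
    rw [hperm]
    have hmul : (∑ i : Fin n, ∑ j : Fin n, if i < j then
          (m * ((((if i = q then (1:ℤ) else 0) - (if i = p then 1 else 0))
            - ((if j = q then (1:ℤ) else 0) - (if j = p then 1 else 0))).natAbs)) else 0)
        = m * ∑ i : Fin n, ∑ j : Fin n, (if i < j then
          (((((if i = q then (1:ℤ) else 0) - (if i = p then 1 else 0))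
            - ((if j = q then (1:ℤ) else 0) - (if j = p then 1 else 0))).natAbs)) else 0) := by
      rw [Finset.mul_sum]
      refine Finset.sum_congr rfl fun i _ => ?_
      rw [Finset.mul_sum]
      refine Finset.sum_congr rfl fun j _ => ?_
      by_cases h : i < j
      · rw [if_pos h, if_pos h]
      · rw [if_neg h, if_neg h, Nat.mul_zero]
    rw [hmul, sum_g0 hn q p hqp]
    ring
  rw [hfirst]
  rfl

end Aff
end AffA


open AffA Aff in
/-- if `β + β' = c` and, for each root `γ_i` of the reduced
expression of `z_d`, either `β' ∩ γ_i = 0` or both `β' > γ_i` and `β' ⊥ γ_i`,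
then `(s_β s_{β'})^m z_d` is reduced; in particular its length is
`2m(n−1) + ℓ(z_d)`. -/
theorem pow_mul_zd_reduced (n : ℕ) (hn : 3 ≤ n) (β β' : Fin n → ℤ)
    (hβ : IsPosRoot β) (hβ' : IsPosRoot β') (hc : β + β' = cvec n)
    (d : Fin n → ℤ) (hd : ∀ i, 0 ≤ d i) (hd0 : ∃ i, d i = 0)
    (z : Aff n) (hz : IsZ d z)
    (l : List (Fin n → ℤ)) (hzl : z = (l.map sref).prod)
    (hroots : ∀ γ ∈ l, IsPosRoot γ ∧ γ < cvec n)
    (hpair : l.Pairwise fun γ γ' => Disconn γ γ' ∨ (Perp γ γ' ∧ (γ ≤ γ' ∨ γ' ≤ γ)))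
    (hred : len z = (l.map fun γ => len (sref γ)).sum)
    (hcond : ∀ γ ∈ l, inter β' γ = 0 ∨ (γ < β' ∧ Perp β' γ))
    (m : ℕ) (hm : 1 ≤ m) :
    len ((sref β * sref β') ^ m * z) = len ((sref β * sref β') ^ m) + len z ∧
    len ((sref β * sref β') ^ m * z) = 2 * m * (n - 1) + len z := by
  have hcpt : ∀ i : Fin n, β i + β' i = 1 := by
    intro i
    have h := congrFun hc i
    simpa [cvec, Pi.add_apply] using h
  have h01' : ∀ i, β' i = 0 ∨ β' i = 1 := by
    intro i
    have h1 := hβ'.2 i; have h2 := hβ.2 i; have h3 := hcpt i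
    omega
  obtain ⟨q, p, hqp, hfinb, hformb⟩ := encode hn hβ'.1 h01'
  have hfinβ : ∀ i, finPart β i = (if i = p then (1:ℤ) else 0) - (if i = q then 1 else 0) := by
    intro i
    have h4 := hfinb i
    unfold finPart at h4 ⊢
    have h5 := hcpt i; have h6 := hcpt (fsucc i)
    have he : β (fsucc i) - β i = -(β' (fsucc i) - β' i) := by omega
    rw [he, h4]
    ring
  have hn0 : 0 < n := by omega
  have hsβ : sref β = mkRef p q (β ⟨0, hn0⟩) := sref_eq hn (Ne.symm hqp) hfinβ
  have hsβ' : sref β' = mkRef q p (β' ⟨0, hn0⟩) := sref_eq hn hqp hfinb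
  have hX : sref β * sref β'
      = (⟨1, fun i => (if i = q then (1:ℤ) else 0) - (if i = p then 1 else 0)⟩ : Aff n) := by
    rw [hsβ, hsβ']
    exact srefs_mul hn q p hqp _ _ (hcpt ⟨0, hn0⟩)
  have hroots' : ∀ γ ∈ l, (∀ i, γ i = 0 ∨ γ i = 1) ∧ pairing γ γ = 2 := by
    intro γ hγ
    obtain ⟨⟨hr, hpos⟩, hlt⟩ := hroots γ hγ
    refine ⟨fun i => ?_, hr⟩
    have h1 := hpos i
    have h2 : γ i ≤ 1 := by
      have h3 := (Pi.le_def.mp (le_of_lt hlt)) i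
      simpa [cvec] using h3
    omega
  obtain ⟨L, hprodL, hencL⟩ := buildL hn l hroots'
  have hcond' : ∀ γ ∈ l, (∀ i, β' i = 0 ∨ γ i = 0) ∨ ((∀ i, γ i ≤ β' i) ∧ pairing β' γ = 0) := by
    intro γ hγ
    rcases hcond γ hγ with h | ⟨hlt, hperp⟩
    · left
      intro i
      by_cases e : β' i = 0
      · exact Or.inl e
      · by_cases e2 : γ i = 0
        · exact Or.inr e2
        · exfalso
          have h2 := congrFun h i
          simp only [inter, Pi.zero_apply] at h2
          rw [if_pos ⟨e, e2⟩] at h2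
          exact one_ne_zero h2
    · exact Or.inr ⟨fun i => (Pi.le_def.mp (le_of_lt hlt)) i, hperp⟩
  have hARC := arcfacts_of hn hqp hformb hfinb l L hencL hcond'
  have hdisjL := pairwise_pdisj hn l L hencL hpair
  rw [hzl, hprodL, hX, trE_pow]
  constructor
  · rw [len_additive hn q p hqp L hARC hdisjL m _ (fun x => rfl),
      len_Xm hn q p hqp m _ (fun x => rfl)]
  · rw [len_additive hn q p hqp L hARC hdisjL m _ (fun x => rfl)]
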